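/- Let H = H(n,r,q|σ) with Δ(σ) ≥ 2, 2 ≤ α ≤ s(σ) = β, n ≥ s(σ)² and q ≥ (Δ(σ)-1)β + 1. Then in every valid (α,β)-colouring of H, every class is monochromatic; hence the (α,β)-spectrum of H equals the monochromatic zone. -/

import Mathlib

open Finset
/-- `K` is an edge of the σ-hypergraph `H(n,r,q | σ)`: the multiset of non-zero
cardinalities of the intersections of `K` with the `n` classes equals `σ`. -/
def sigmaEdge (n q : ℕ) (σ : Multiset ℕ) (K : Finset (Fin n × Fin q)) : Prop :=
  (((Finset.univ : Finset (Fin n)).val.map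
      fun i => (K.filter fun v => v.1 = i).card).filter fun m => m ≠ 0) = σ

/-- `c` is an `(α,β)`-colouring: every edge contains at least `α` and at most `β` colours. -/
def isABColouring (n q : ℕ) (σ : Multiset ℕ) (α β : ℕ) (c : Fin n × Fin q → ℕ) : Prop :=
  ∀ K : Finset (Fin n × Fin q), sigmaEdge n q σ K →
    α ≤ (K.image c).card ∧ (K.image c).card ≤ β

/-- `c` uses exactly `k` colours. -/
def usesExactly (n q k : ℕ) (c : Fin n × Fin q → ℕ) : Prop :=
  ((Finset.univ : Finset (Fin n × Fin q)).image c).card = k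

/-- every class of the σ-hypergraph is monochromatic under `c`. -/
def classesMonochromatic (n q : ℕ) (c : Fin n × Fin q → ℕ) : Prop :=
  ∀ v w : Fin n × Fin q, v.1 = w.1 → c v = c w

/-- `σ` is a partition of `r` (a multiset of positive integers summing to `r`). -/
def IsPartitionOf (σ : Multiset ℕ) (r : ℕ) : Prop := σ.sum = r ∧ 0 ∉ σ




theorem Finset.exists_intermediate_set {α : Type*} {A B : Finset α} (i : ℕ)
    (h₁ : i + B.card ≤ A.card) (h₂ : B ⊆ A) :
    ∃ C : Finset α, B ⊆ C ∧ C ⊆ A ∧ C.card = i + B.card :=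
  Finset.exists_subsuperset_card_eq h₂ (by omega) h₁

/-- matching a finset to a multiset of the same cardinality -/
lemma exists_match {X : Type*} [DecidableEq X] (I : Finset X) :
    ∀ (μ : Multiset ℕ), I.card = Multiset.card μ → ∃ g : X → ℕ, I.val.map g = μ := by
  classical
  induction I using Finset.induction_on with
  | empty => intro μ h; exact ⟨fun _ => 0, by simp at h ⊢; exact (Multiset.card_eq_zero.mp h.symm).symm ▸ rfl⟩
  | insert a I hx ih =>
    intro μ h
    rw [Finset.card_insert_of_notMem hx] at h
    have hμ : μ ≠ 0 := by
      intro h0; rw [h0] at h; simp at h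
    obtain ⟨x, hxμ⟩ := Multiset.exists_mem_of_ne_zero hμ
    obtain ⟨g, hg⟩ := ih (μ.erase x) (by rw [Multiset.card_erase_of_mem hxμ, ← h]; rfl)
    refine ⟨Function.update g a x, ?_⟩
    rw [Finset.insert_val, Multiset.ndinsert_of_notMem (by simpa using hx), Multiset.map_cons]
    have : Multiset.map (Function.update g a x) I.val = Multiset.map g I.val := by
      apply Multiset.map_congr rfl
      intro y hy
      exact Function.update_of_ne (by rintro rfl; exact hx hy) _ _
    rw [this, hg, Function.update_self]
    exact Multiset.cons_erase hxμ


variable {n q : ℕ}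

def emb (i : Fin n) : Fin q ↪ Fin n × Fin q :=
  ⟨fun x => (i, x), fun a b h => by simpa using h⟩

def edgeOf (I : Finset (Fin n)) (T : Fin n → Finset (Fin q)) : Finset (Fin n × Fin q) :=
  I.biUnion fun i => (T i).map (emb i)

lemma mem_map_emb (i : Fin n) (S : Finset (Fin q)) (a : Fin n) (b : Fin q) :
    (a, b) ∈ S.map (emb i) ↔ a = i ∧ b ∈ S := by
  simp only [mem_map, emb, Function.Embedding.coeFn_mk, Prod.mk.injEq]
  constructor
  · rintro ⟨x, hx, rfl, rfl⟩; exact ⟨rfl, hx⟩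
  · rintro ⟨rfl, hb⟩; exact ⟨b, hb, rfl⟩

lemma edgeOf_filter (I : Finset (Fin n)) (T : Fin n → Finset (Fin q)) (i : Fin n) :
    (edgeOf I T).filter (fun v => v.1 = i) = if i ∈ I then (T i).map (emb i) else ∅ := by
  ext ⟨a, b⟩
  simp only [edgeOf, mem_filter, mem_biUnion]
  constructor
  · rintro ⟨⟨j, hj, hmem⟩, rfl⟩
    rw [mem_map_emb] at hmem
    obtain ⟨rfl, hb⟩ := hmem
    rw [if_pos hj]
    exact (mem_map_emb _ _ _ _).2 ⟨rfl, hb⟩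
  · intro h
    by_cases hi : i ∈ I
    · rw [if_pos hi, mem_map_emb] at h
      obtain ⟨rfl, hb⟩ := h
      exact ⟨⟨a, hi, (mem_map_emb _ _ _ _).2 ⟨rfl, hb⟩⟩, rfl⟩
    · rw [if_neg hi] at h; exact absurd h (notMem_empty _)

lemma edgeOf_card_filter (I : Finset (Fin n)) (T : Fin n → Finset (Fin q)) (i : Fin n) :
    ((edgeOf I T).filter (fun v => v.1 = i)).card = if i ∈ I then (T i).card else 0 := by
  rw [edgeOf_filter]
  split <;> simp

lemma edgeOf_sigmaEdge {σ : Multiset ℕ} (I : Finset (Fin n)) (T : Fin n → Finset (Fin q))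
    (hmap : I.val.map (fun i => (T i).card) = σ) (h0 : 0 ∉ σ) :
    sigmaEdge n q σ (edgeOf I T) := by
  unfold sigmaEdge
  have hle : I.val ≤ (univ : Finset (Fin n)).val := by
    exact Finset.val_le_iff.mpr (subset_univ I)
  have hsplit : (univ : Finset (Fin n)).val = I.val + ((univ : Finset (Fin n)).val - I.val) :=
    (add_tsub_cancel_of_le hle).symm
  rw [hsplit, Multiset.map_add, Multiset.filter_add]
  have h1 : Multiset.filter (fun m => m ≠ 0)
      (I.val.map fun i => ((edgeOf I T).filter fun v => v.1 = i).card) = σ := by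
    have : (I.val.map fun i => ((edgeOf I T).filter fun v => v.1 = i).card)
        = I.val.map fun i => (T i).card := by
      apply Multiset.map_congr rfl
      intro i hi
      rw [edgeOf_card_filter, if_pos (Finset.mem_def.mpr hi)]
    rw [this, hmap]
    exact Multiset.filter_eq_self.mpr (fun a ha h => h0 (h ▸ ha))
  rw [h1]
  have h2 : Multiset.filter (fun m => m ≠ 0)
      (((univ : Finset (Fin n)).val - I.val).map
        fun i => ((edgeOf I T).filter fun v => v.1 = i).card) = 0 := by
    rw [Multiset.filter_eq_nil]
    intro a ha
    rw [Multiset.mem_map] at ha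
    obtain ⟨i, hi, rfl⟩ := ha
    have hiI : i ∉ I := by
      intro hmem
      have hc := Multiset.count_le_of_le i hle
      have h1 : Multiset.count i I.val = 1 := Multiset.count_eq_one_of_mem I.nodup hmem
      have h2 : Multiset.count i ((univ : Finset (Fin n)).val) = 1 :=
        Multiset.count_eq_one_of_mem (univ : Finset (Fin n)).nodup (mem_univ i)
      have : Multiset.count i ((univ : Finset (Fin n)).val - I.val) = 0 := by
        rw [Multiset.count_sub, h1, h2]
      exact absurd (Multiset.count_pos.mpr hi) (by omega)
    rw [edgeOf_card_filter, if_neg hiI]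
    simp
  rw [h2, add_zero]

lemma edgeOf_image (c : Fin n × Fin q → ℕ) (I : Finset (Fin n)) (T : Fin n → Finset (Fin q)) :
    (edgeOf I T).image c = I.biUnion fun i => (T i).image fun x => c (i, x) := by
  unfold edgeOf
  rw [Finset.biUnion_image]
  apply Finset.biUnion_congr rfl
  intro i _
  ext y
  simp [emb]
  rfl
section helpers

variable {n q Δ : ℕ} (c : Fin n × Fin q → ℕ)

/-- colours appearing in class `i` -/
def classCols (i : Fin n) : Finset ℕ := (univ : Finset (Fin q)).image fun y => c (i, y)

/-- vertices of class `i` with colour `x` -/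
def heavySet (i : Fin n) (x : ℕ) : Finset (Fin q) :=
  (univ : Finset (Fin q)).filter fun y => c (i, y) = x

lemma pigeon (i : Fin n) (p : ℕ) (hA : (classCols c i).card ≤ p)
    (hq : (Δ - 1) * p + 1 ≤ q) (hΔ : 1 ≤ Δ) :
    ∃ x, Δ ≤ (heavySet c i x).card := by
  have hmaps : ∀ y ∈ (univ : Finset (Fin q)), c (i, y) ∈ classCols c i :=
    fun y _ => mem_image_of_mem _ (mem_univ y)
  have hlt : (classCols c i).card * (Δ - 1) < (univ : Finset (Fin q)).card := by
    rw [card_univ, Fintype.card_fin]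
    calc (classCols c i).card * (Δ - 1) ≤ p * (Δ - 1) := Nat.mul_le_mul_right _ hA
      _ = (Δ - 1) * p := Nat.mul_comm _ _
      _ < q := by omega
  obtain ⟨x, _, hx⟩ := Finset.exists_lt_card_fiber_of_mul_lt_card_of_maps_to hmaps hlt
  exact ⟨x, by unfold heavySet; omega⟩

lemma rainbow_select (D : Fin n) (Y : Finset ℕ) (k : ℕ)
    (hk : k ≤ ((classCols c D) \ Y).card) (hkΔ : k ≤ Δ) (hΔq : Δ ≤ q) :
    ∃ S : Finset (Fin q), S.card = Δ ∧ k ≤ ((S.image fun y => c (D, y)) \ Y).card := by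
  obtain ⟨X, hXsub, hXcard⟩ := Finset.exists_subset_card_eq hk
  have hpick : ∀ x : ℕ, x ∈ X → ∃ y : Fin q, c (D, y) = x := by
    intro x hx
    have : x ∈ classCols c D := (mem_sdiff.mp (hXsub hx)).1
    obtain ⟨y, _, hy⟩ := mem_image.mp this
    exact ⟨y, hy⟩
  classical
  choose pick hpickspec using hpick
  set S₀ : Finset (Fin q) := X.attach.image (fun x => pick x.1 x.2) with hS₀
  have himg : S₀.image (fun y => c (D, y)) = X := by
    apply Finset.Subset.antisymm
    · intro z hz
      simp only [hS₀, Finset.image_image, mem_image, mem_attach, true_and, Subtype.exists] at hz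
      obtain ⟨x, hx, rfl⟩ := hz
      rw [Function.comp_apply, hpickspec x hx]
      exact hx
    · intro x hx
      refine mem_image.mpr ⟨pick x hx, ?_, hpickspec x hx⟩
      exact mem_image.mpr ⟨⟨x, hx⟩, mem_attach _ _, rfl⟩
  have hS₀card : S₀.card ≤ Δ := by
    calc S₀.card ≤ X.attach.card := Finset.card_image_le
      _ = k := by rw [Finset.card_attach, hXcard]
      _ ≤ Δ := hkΔ
  obtain ⟨S, hS₀S, _, hScard⟩ := Finset.exists_intermediate_set (Δ - S₀.card)
    (by rw [card_univ, Fintype.card_fin]; omega) (Finset.subset_univ S₀)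
  refine ⟨S, by omega, ?_⟩
  calc k = (X \ Y).card := by
        rw [Finset.sdiff_eq_self_of_disjoint, hXcard]
        exact Finset.disjoint_left.mpr fun a ha hay => (mem_sdiff.mp (hXsub ha)).2 hay
    _ ≤ _ := by
        apply Finset.card_le_card
        apply Finset.sdiff_subset_sdiff _ (le_refl _)
        rw [← himg]
        exact Finset.image_subset_image hS₀S

end helpers
section master

variable {n q α β Δ : ℕ} {σ : Multiset ℕ} {c : Fin n × Fin q → ℕ}

lemma colour_bound (hc : isABColouring n q σ α β c) (h0 : 0 ∉ σ)
    (I : Finset (Fin n)) (T : Fin n → Finset (Fin q))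
    (hmap : I.val.map (fun i => (T i).card) = σ) :
    α ≤ (I.biUnion fun i => (T i).image fun x => c (i, x)).card ∧
      (I.biUnion fun i => (T i).image fun x => c (i, x)).card ≤ β := by
  have h := hc _ (edgeOf_sigmaEdge I T hmap h0)
  rwa [edgeOf_image] at h

lemma insert_map_sizes (i₀ : Fin n) (J : Finset (Fin n)) (hi₀ : i₀ ∉ J)
    (T : Fin n → Finset (Fin q)) (_f : Fin n → ℕ) :
    (insert i₀ J).val.map (fun i => (T i).card) =
      (T i₀).card ::ₘ J.val.map (fun i => (T i).card) := by
  rw [Finset.insert_val, Multiset.ndinsert_of_notMem (by simpa using hi₀), Multiset.map_cons]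

/-- `s` classes each having `Δ` vertices of the common colour `x` yield a monochromatic
edge, contradicting `α ≥ 2`. -/
lemma mono_contra (hc : isABColouring n q σ α β c) (h0 : 0 ∉ σ)
    (hΔmax : ∀ y ∈ σ, y ≤ Δ) (hα : 2 ≤ α) (x : ℕ) (F : Finset (Fin n))
    (hF : F.card = Multiset.card σ) (hheavy : ∀ i ∈ F, Δ ≤ (heavySet c i x).card) : False := by
  classical
  obtain ⟨g, hg⟩ := exists_match F σ hF
  have hgσ : ∀ i ∈ F, g i ∈ σ := by
    intro i hi
    rw [← hg]
    exact Multiset.mem_map_of_mem g hi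
  have hT : ∀ i : Fin n, ∃ S : Finset (Fin q), i ∈ F → (S.card = g i ∧ S ⊆ heavySet c i x) := by
    intro i
    by_cases hi : i ∈ F
    · obtain ⟨S, hS1, hS2⟩ := Finset.exists_subset_card_eq (s := heavySet c i x) (n := g i)
        ((hΔmax _ (hgσ i hi)).trans (hheavy i hi))
      exact ⟨S, fun _ => ⟨hS2, hS1⟩⟩
    · exact ⟨∅, fun h => absurd h hi⟩
  choose T hT using hT
  have hmap : F.val.map (fun i => (T i).card) = σ := by
    rw [← hg]
    exact Multiset.map_congr rfl fun i hi => ((hT i) hi).1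
  have hb := (colour_bound hc h0 F T hmap).1
  have hsub : (F.biUnion fun i => (T i).image fun y => c (i, y)) ⊆ {x} := by
    intro z hz
    obtain ⟨i, hi, hz⟩ := mem_biUnion.mp hz
    obtain ⟨y, hy, rfl⟩ := mem_image.mp hz
    have := ((hT i) hi).2 hy
    rw [mem_singleton]
    exact (mem_filter.mp this).2
  have := Finset.card_le_card hsub
  simp only [card_singleton] at this
  omega

end master
section main

variable {n q α β Δ : ℕ} {σ : Multiset ℕ} {c : Fin n × Fin q → ℕ}

/-- If class `D` has no colour appearing `Δ` times, then any partial rainbow transversal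
avoiding `D` has size at most `σ.card - Δ`. -/
lemma diam_bound (hc : isABColouring n q σ α β c) (h0 : 0 ∉ σ)
    (hΔmem : Δ ∈ σ) (hΔmax : ∀ y ∈ σ, y ≤ Δ) (hΔ2 : 2 ≤ Δ)
    (hs2 : 2 ≤ Multiset.card σ) (hβ : β = Multiset.card σ)
    (hq : (Δ - 1) * Multiset.card σ + 1 ≤ q) (hn : Multiset.card σ ≤ n)
    (D : Fin n) (hbad : ∀ x, (heavySet c D x).card < Δ)
    (W : Finset (Fin n × Fin q)) (hWD : ∀ v ∈ W, v.1 ≠ D)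
    (hWf : Set.InjOn Prod.fst (W : Set (Fin n × Fin q)))
    (hWc : Set.InjOn c (W : Set (Fin n × Fin q))) :
    W.card + Δ ≤ Multiset.card σ := by
  classical
  by_contra hcon
  push_neg at hcon
  set s := Multiset.card σ with hs
  set τ := σ.erase Δ with hτ
  have hτcons : Δ ::ₘ τ = σ := Multiset.cons_erase hΔmem
  have hτcard : Multiset.card τ = s - 1 := by
    rw [hτ, Multiset.card_erase_of_mem hΔmem]; rfl
  have hΔq : Δ ≤ q := by
    have h2 : (Δ - 1) * 2 ≤ (Δ - 1) * s := Nat.mul_le_mul_left _ hs2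
    omega
  -- the bad class has many colours
  have hAD : s + 1 ≤ (classCols c D).card := by
    by_contra hle
    push_neg at hle
    obtain ⟨x, hx⟩ := pigeon c D s (by omega) hq (by omega)
    exact absurd hx (by have := hbad x; omega)
  -- shrink the transversal
  set t₀ := min W.card (s - 1) with ht₀
  obtain ⟨W', hW'sub, hW'card⟩ := Finset.exists_subset_card_eq (s := W) (n := t₀) (Nat.min_le_left _ _)
  have hW'f : Set.InjOn Prod.fst (W' : Set (Fin n × Fin q)) :=
    hWf.mono (by exact_mod_cast hW'sub)
  have hW'c : Set.InjOn c (W' : Set (Fin n × Fin q)) :=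
    hWc.mono (by exact_mod_cast hW'sub)
  -- classes of the transversal
  set J₀ := W'.image Prod.fst with hJ₀
  have hJ₀card : J₀.card = t₀ := by rw [hJ₀, Finset.card_image_of_injOn hW'f, hW'card]
  have hJ₀sub : J₀ ⊆ univ.erase D := by
    intro i hi
    obtain ⟨v, hv, rfl⟩ := mem_image.mp hi
    exact mem_erase.mpr ⟨hWD v (hW'sub hv), mem_univ _⟩
  -- extend to s-1 classes avoiding D
  obtain ⟨J, hJ₀J, hJsub, hJcard⟩ := Finset.exists_intermediate_set (s - 1 - t₀)
    (by
      rw [hJ₀card, Finset.card_erase_of_mem (mem_univ D), card_univ, Fintype.card_fin]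
      omega) hJ₀sub
  rw [hJ₀card] at hJcard
  have hJcard' : J.card = s - 1 := by rw [hJcard]; omega
  have hDJ : D ∉ J := fun h => absurd (hJsub h) (by simp)
  -- sizes for the J-parts
  obtain ⟨g, hg⟩ := exists_match J τ (by rw [hJcard', hτcard])
  have hgτ : ∀ j ∈ J, g j ∈ τ := fun j hj => by
    rw [← hg]; exact Multiset.mem_map_of_mem g hj
  have hg1 : ∀ j ∈ J, 1 ≤ g j := by
    intro j hj
    have := Multiset.mem_of_mem_erase (hτ ▸ hgτ j hj)
    rcases Nat.eq_zero_or_pos (g j) with h | h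
    · exact absurd (h ▸ this) h0
    · exact h
  have hgΔ : ∀ j ∈ J, g j ≤ Δ := fun j hj =>
    hΔmax _ (Multiset.mem_of_mem_erase (hτ ▸ hgτ j hj))
  -- parts on J containing the transversal vertices
  have hTex : ∀ j : Fin n, ∃ S : Finset (Fin q),
      j ∈ J → (S.card = g j ∧ ∀ v ∈ W', v.1 = j → v.2 ∈ S) := by
    intro j
    by_cases hj : j ∈ J
    · set P := (W'.filter fun v => v.1 = j).image Prod.snd with hP
      have hPcard : P.card ≤ 1 := by
        apply le_trans Finset.card_image_le
        apply Finset.card_le_one.mpr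
        intro u hu w hw
        exact hW'f (mem_filter.mp hu).1 (mem_filter.mp hw).1
          ((mem_filter.mp hu).2.trans (mem_filter.mp hw).2.symm)
      obtain ⟨S, hPS, _, hScard⟩ := Finset.exists_intermediate_set (g j - P.card)
        (by rw [card_univ, Fintype.card_fin]; have := hg1 j hj; have := hgΔ j hj; omega)
        (Finset.subset_univ P)
      refine ⟨S, fun _ => ⟨by rw [hScard]; have := hg1 j hj; omega, ?_⟩⟩
      intro v hv hvj
      exact hPS (mem_image.mpr ⟨v, mem_filter.mpr ⟨hv, hvj⟩, rfl⟩)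
    · exact ⟨∅, fun h => absurd h hj⟩
  choose T hT using hTex
  have hsize : J.val.map (fun j => (T j).card) = τ := by
    rw [← hg]
    exact Multiset.map_congr rfl fun j hj => (hT j hj).1
  -- the system colours
  set Y := J.biUnion (fun j => (T j).image fun y => c (j, y)) with hY
  have hYW : W'.image c ⊆ Y := by
    intro z hz
    obtain ⟨v, hv, rfl⟩ := mem_image.mp hz
    have hv1J : v.1 ∈ J := hJ₀J (mem_image_of_mem _ hv)
    apply mem_biUnion.mpr ⟨v.1, hv1J, ?_⟩
    refine mem_image.mpr ⟨v.2, (hT v.1 hv1J).2 v hv rfl, ?_⟩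
    rw [Prod.mk.eta]
  have hYt₀ : t₀ ≤ Y.card := by
    have := Finset.card_le_card hYW
    rwa [Finset.card_image_of_injOn hW'c, hW'card] at this
  have hY1 : 1 ≤ Y.card := by
    have hJne : J.Nonempty := by
      rw [← Finset.card_pos, hJcard']; omega
    obtain ⟨j, hj⟩ := hJne
    have hTne : (T j).Nonempty := by
      rw [← Finset.card_pos, (hT j hj).1]; exact hg1 j hj
    obtain ⟨y, hy⟩ := hTne
    have : c (j, y) ∈ Y := mem_biUnion.mpr ⟨j, hj, mem_image_of_mem _ hy⟩
    exact Finset.card_pos.mpr ⟨_, this⟩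
  -- choose the D-part
  by_cases hYs : s + 1 ≤ Y.card
  case pos =>
    -- any D-part gives an edge with too many colours
    obtain ⟨S, _, hScard⟩ := Finset.exists_subset_card_eq (s := (univ : Finset (Fin q))) (n := Δ)
      (by rw [card_univ, Fintype.card_fin]; exact hΔq)
    set T' := Function.update T D S with hT'
    have hmap : (insert D J).val.map (fun i => (T' i).card) = σ := by
      rw [insert_map_sizes D J hDJ T' (fun _ => 0), ← hτcons]
      congr 1
      · rw [hT', Function.update_self, hScard]
      · rw [← hsize]
        exact Multiset.map_congr rfl fun j hj => by
          rw [hT', Function.update_of_ne (by rintro rfl; exact hDJ hj)]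
    have hbnd := (colour_bound hc h0 (insert D J) T' hmap).2
    have hYsub : Y ⊆ (insert D J).biUnion fun i => (T' i).image fun x => c (i, x) := by
      intro z hz
      obtain ⟨j, hj, hz⟩ := mem_biUnion.mp hz
      refine mem_biUnion.mpr ⟨j, mem_insert_of_mem hj, ?_⟩
      rwa [hT', Function.update_of_ne (by rintro rfl; exact hDJ hj)]
    have := Finset.card_le_card hYsub
    omega
  case neg =>
    push_neg at hYs
    set k := min Δ (s + 1 - Y.card) with hk
    obtain ⟨S, hScard, hSnew⟩ := rainbow_select c D Y k
      (by
        have h1 := Finset.le_card_sdiff Y (classCols c D)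
        omega)
      (Nat.min_le_left _ _) hΔq
    set T' := Function.update T D S with hT'
    have hmap : (insert D J).val.map (fun i => (T' i).card) = σ := by
      rw [insert_map_sizes D J hDJ T' (fun _ => 0), ← hτcons]
      congr 1
      · rw [hT', Function.update_self, hScard]
      · rw [← hsize]
        exact Multiset.map_congr rfl fun j hj => by
          rw [hT', Function.update_of_ne (by rintro rfl; exact hDJ hj)]
    have hbnd := (colour_bound hc h0 (insert D J) T' hmap).2
    set U := (insert D J).biUnion fun i => (T' i).image fun x => c (i, x) with hU
    have hYsub : Y ⊆ U := by
      intro z hz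
      obtain ⟨j, hj, hz⟩ := mem_biUnion.mp hz
      refine mem_biUnion.mpr ⟨j, mem_insert_of_mem hj, ?_⟩
      rwa [hT', Function.update_of_ne (by rintro rfl; exact hDJ hj)]
    have hSsub : (S.image fun y => c (D, y)) \ Y ⊆ U := by
      intro z hz
      have hz' := (mem_sdiff.mp hz).1
      refine mem_biUnion.mpr ⟨D, mem_insert_self _ _, ?_⟩
      rwa [hT', Function.update_self]
    have hunion : Y.card + k ≤ U.card := by
      have hdisj : Disjoint Y ((S.image fun y => c (D, y)) \ Y) :=
        Finset.disjoint_sdiff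
      have := Finset.card_le_card (Finset.union_subset hYsub hSsub)
      rw [Finset.card_union_of_disjoint hdisj] at this
      omega
    omega

lemma all_good (hc : isABColouring n q σ α β c) (h0 : 0 ∉ σ)
    (hΔmem : Δ ∈ σ) (hΔmax : ∀ y ∈ σ, y ≤ Δ) (hΔ2 : 2 ≤ Δ) (hα : 2 ≤ α)
    (hs2 : 2 ≤ Multiset.card σ) (hβ : β = Multiset.card σ)
    (hq : (Δ - 1) * Multiset.card σ + 1 ≤ q) (hn : Multiset.card σ ^ 2 ≤ n) :
    ∀ D : Fin n, ∃ x, Δ ≤ (heavySet c D x).card := by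
  classical
  set s := Multiset.card σ with hs
  have hsn : s ≤ n := by
    have : s * 1 ≤ s * s := Nat.mul_le_mul_left _ (by omega)
    have h2 : s ^ 2 = s * s := sq s
    omega
  intro D
  by_contra hbad
  push_neg at hbad
  -- maximal rainbow transversal avoiding D
  set P : Finset (Fin n × Fin q) → Prop := fun W =>
    (∀ v ∈ W, v.1 ≠ D) ∧ (W.image Prod.fst).card = W.card ∧ (W.image c).card = W.card
    with hP
  set 𝒯 := (univ : Finset (Fin n × Fin q)).powerset.filter P with h𝒯
  have hne : 𝒯.Nonempty := ⟨∅, by simp [h𝒯, hP]⟩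
  obtain ⟨W₀, hW₀mem, hmax⟩ := Finset.exists_max_image 𝒯 Finset.card hne
  obtain ⟨hW₀D, hW₀f, hW₀c⟩ : P W₀ := (mem_filter.mp hW₀mem).2
  set p := W₀.card with hp
  have hinjf : Set.InjOn Prod.fst (W₀ : Set (Fin n × Fin q)) :=
    Finset.card_image_iff.mp hW₀f
  have hinjc : Set.InjOn c (W₀ : Set (Fin n × Fin q)) :=
    Finset.card_image_iff.mp hW₀c
  have hpΔ : p + Δ ≤ s :=
    diam_bound hc h0 hΔmem hΔmax hΔ2 hs2 hβ hq hsn D hbad W₀ hW₀D hinjf hinjc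
  set X := W₀.image c with hX
  have hXcard : X.card = p := hW₀c
  -- maximality: colours outside the transversal classes lie in X
  have hmaxprop : ∀ (E : Fin n) (y : Fin q), E ≠ D → E ∉ W₀.image Prod.fst →
      c (E, y) ∈ X := by
    intro E y hED hE
    by_contra hcEy
    have hnew : (E, y) ∉ W₀ := fun h => hE (mem_image_of_mem _ h)
    have hmem : insert (E, y) W₀ ∈ 𝒯 := by
      rw [h𝒯, mem_filter]
      refine ⟨Finset.mem_powerset.mpr (subset_univ _), ?_, ?_, ?_⟩
      · intro v hv
        rcases mem_insert.mp hv with rfl | hv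
        · exact hED
        · exact hW₀D v hv
      · rw [Finset.image_insert, Finset.card_insert_of_notMem hE,
          Finset.card_insert_of_notMem hnew, hW₀f]
      · rw [Finset.image_insert, Finset.card_insert_of_notMem hcEy,
          Finset.card_insert_of_notMem hnew, hW₀c]
    have := hmax _ hmem
    rw [Finset.card_insert_of_notMem hnew] at this
    omega
  -- the confined classes
  set G := (univ.erase D) \ (W₀.image Prod.fst) with hG
  have hGcard : n - 1 - p ≤ G.card := by
    have h1 := Finset.le_card_sdiff (W₀.image Prod.fst) (univ.erase D)
    rw [← hG] at h1
    have h2 : (W₀.image Prod.fst).card = p := hW₀f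
    rw [Finset.card_erase_of_mem (mem_univ D), card_univ, Fintype.card_fin] at h1
    omega
  have hAE : ∀ E ∈ G, classCols c E ⊆ X := by
    intro E hE z hz
    obtain ⟨y, _, rfl⟩ := mem_image.mp hz
    have h1 := mem_sdiff.mp hE
    exact hmaxprop E y (mem_erase.mp h1.1).1 h1.2
  have hgood : ∀ E : Fin n, ∃ x, E ∈ G → Δ ≤ (heavySet c E x).card := by
    intro E
    by_cases hE : E ∈ G
    · have h1 : (classCols c E).card ≤ p := by
        rw [← hXcard]; exact Finset.card_le_card (hAE E hE)
      obtain ⟨x, hx⟩ := pigeon (Δ := Δ) c E p h1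
        (by
          have : (Δ - 1) * p ≤ (Δ - 1) * s := Nat.mul_le_mul_left _ (by omega)
          omega)
        (by omega)
      exact ⟨x, fun _ => hx⟩
    · exact ⟨0, fun h => absurd h hE⟩
  choose m hm using hgood
  have hmX : ∀ E ∈ G, m E ∈ X := by
    intro E hE
    have h1 : 1 ≤ (heavySet c E (m E)).card := le_trans (by omega) (hm E hE)
    obtain ⟨y, hy⟩ := Finset.card_pos.mp h1
    have : c (E, y) = m E := (mem_filter.mp hy).2
    exact this ▸ hAE E hE (mem_image_of_mem _ (mem_univ y))
  -- pigeonhole: s classes share a heavy colour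
  have hcount : X.card * (s - 1) < G.card := by
    have h1 : p * s ≤ (s - 2) * s := Nat.mul_le_mul_right _ (by omega)
    have h2 : (s - 2) * s + 2 * s = s * s := by
      rw [← Nat.add_mul]
      congr 1
      omega
    have h3 : s ^ 2 = s * s := sq s
    have h4 : p * (s - 1) + p = p * s := by
      rw [← Nat.mul_succ]
      congr 1
      omega
    rw [hXcard]
    omega
  obtain ⟨x, _, hx⟩ :=
    Finset.exists_lt_card_fiber_of_mul_lt_card_of_maps_to hmX hcount
  obtain ⟨F, hFsub, hFcard⟩ := Finset.exists_subset_card_eq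
    (s := G.filter fun E => m E = x) (n := s) (by omega)
  refine mono_contra hc h0 hΔmax hα x F hFcard ?_
  intro i hi
  have h1 := mem_filter.mp (hFsub hi)
  exact h1.2 ▸ hm i h1.1

lemma key (hc : isABColouring n q σ α β c) (h0 : 0 ∉ σ)
    (hΔmem : Δ ∈ σ) (hΔmax : ∀ y ∈ σ, y ≤ Δ) (hΔ2 : 2 ≤ Δ) (hα : 2 ≤ α)
    (hs2 : 2 ≤ Multiset.card σ) (hβ : β = Multiset.card σ)
    (hq : (Δ - 1) * Multiset.card σ + 1 ≤ q) (hn : Multiset.card σ ^ 2 ≤ n) :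
    classesMonochromatic n q c := by
  classical
  set s := Multiset.card σ with hs
  have hΔq : Δ ≤ q := by
    have h2 : (Δ - 1) * 2 ≤ (Δ - 1) * s := Nat.mul_le_mul_left _ hs2
    omega
  choose m hm using all_good hc h0 hΔmem hΔmax hΔ2 hα hs2 hβ hq hn
  -- each heavy colour is shared by at most s-1 classes
  have hfib : ∀ x : ℕ, ((univ : Finset (Fin n)).filter fun i => m i = x).card ≤ s - 1 := by
    intro x
    by_contra hbig
    push_neg at hbig
    obtain ⟨F, hFsub, hFcard⟩ := Finset.exists_subset_card_eq
      (s := (univ : Finset (Fin n)).filter fun i => m i = x) (n := s) (by omega)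
    refine mono_contra hc h0 hΔmax hα x F hFcard ?_
    intro i hi
    have h1 := (mem_filter.mp (hFsub hi)).2
    exact h1 ▸ hm i
  -- hence at least s+2 distinct heavy colours
  set V := (univ : Finset (Fin n)).image m with hV
  have hVcard : s + 2 ≤ V.card := by
    by_contra hVs
    push_neg at hVs
    have h1 : (univ : Finset (Fin n)).card ≤ (s - 1) * V.card :=
      Finset.card_le_mul_card_image _ _ (fun a _ => hfib a)
    rw [card_univ, Fintype.card_fin] at h1
    have h2 : (s - 1) * V.card ≤ (s - 1) * (s + 1) := Nat.mul_le_mul_left _ (by omega)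
    obtain ⟨u, hu⟩ : ∃ u, s = u + 1 := ⟨s - 1, by omega⟩
    have h3 : (s - 1) * (s + 1) + 1 = s * s := by
      rw [hu]
      simp only [Nat.add_sub_cancel]
      ring
    have h4 : s ^ 2 = s * s := sq s
    omega
  -- now suppose a class has two colours
  intro v w hvw
  by_contra hab
  have huv : v.2 ≠ w.2 := by
    intro h
    exact hab (congrArg c (Prod.ext hvw h))
  set τ := σ.erase Δ with hτ
  have hτcons : Δ ::ₘ τ = σ := Multiset.cons_erase hΔmem
  have hτcard : Multiset.card τ = s - 1 := by
    rw [hτ, Multiset.card_erase_of_mem hΔmem]; rfl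
  set a := c v with ha
  set b := c w with hb
  -- choose s-1 classes with distinct heavy colours avoiding a, b, m v.1
  set V' := V \ {a, b, m v.1} with hV'
  have hV'card : s - 1 ≤ V'.card := by
    have h1 := Finset.le_card_sdiff ({a, b, m v.1} : Finset ℕ) V
    rw [← hV'] at h1
    have h2 : ({a, b, m v.1} : Finset ℕ).card ≤ 3 := by
      apply le_trans (Finset.card_insert_le _ _)
      apply Nat.add_le_add_right
      apply le_trans (Finset.card_insert_le _ _)
      simp
    omega
  obtain ⟨V'', hV''sub, hV''card⟩ := Finset.exists_subset_card_eq (s := V') (n := s - 1) hV'card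
  have hrepex : ∀ x : ℕ, ∃ E : Fin n, x ∈ V'' → m E = x := by
    intro x
    by_cases hx : x ∈ V''
    · have : x ∈ V := (mem_sdiff.mp (hV''sub hx)).1
      obtain ⟨E, _, hE⟩ := mem_image.mp this
      exact ⟨E, fun _ => hE⟩
    · exact ⟨v.1, fun h => absurd h hx⟩
  choose rep hrep using hrepex
  set J := V''.image rep with hJ
  have hrepinj : Set.InjOn rep (V'' : Set ℕ) := by
    intro x hx y hy hxy
    rw [← hrep x hx, ← hrep y hy, hxy]
  have hJcard : J.card = s - 1 := by
    rw [hJ, Finset.card_image_of_injOn hrepinj, hV''card]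
  have hCJ : v.1 ∉ J := by
    intro hmem
    obtain ⟨x, hx, hx2⟩ := mem_image.mp hmem
    have h1 : m v.1 = x := hx2 ▸ hrep x hx
    have h2 := (mem_sdiff.mp (hV''sub hx)).2
    simp only [mem_insert, mem_singleton] at h2
    push_neg at h2
    exact h2.2.2 h1.symm
  -- sizes and parts
  obtain ⟨g, hg⟩ := exists_match J τ (by rw [hJcard, hτcard])
  have hgτ : ∀ j ∈ J, g j ∈ σ := fun j hj => by
    have : g j ∈ τ := by rw [← hg]; exact Multiset.mem_map_of_mem g hj
    exact Multiset.mem_of_mem_erase (hτ ▸ this)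
  have hg1 : ∀ j ∈ J, 1 ≤ g j := by
    intro j hj
    rcases Nat.eq_zero_or_pos (g j) with h | h
    · exact absurd (h ▸ hgτ j hj) h0
    · exact h
  have hTex : ∀ j : Fin n, ∃ S : Finset (Fin q),
      j ∈ J → (S.card = g j ∧ S ⊆ heavySet c j (m j)) := by
    intro j
    by_cases hj : j ∈ J
    · obtain ⟨S, hS1, hS2⟩ := Finset.exists_subset_card_eq (s := heavySet c j (m j)) (n := g j)
        ((hΔmax _ (hgτ j hj)).trans (hm j))
      exact ⟨S, fun _ => ⟨hS2, hS1⟩⟩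
    · exact ⟨∅, fun h => absurd h hj⟩
  choose T hT using hTex
  -- the part in the class of v containing both v.2 and w.2
  obtain ⟨SC, hSCsub, _, hSCcard⟩ := Finset.exists_intermediate_set (Δ - 2)
    (by
      rw [Finset.card_insert_of_notMem (by simpa using huv), Finset.card_singleton,
        card_univ, Fintype.card_fin]
      omega)
    (Finset.subset_univ ({v.2, w.2} : Finset (Fin q)))
  have hSCcard' : SC.card = Δ := by
    rw [hSCcard, Finset.card_insert_of_notMem (by simpa using huv),
      Finset.card_singleton]
    omega
  set T' := Function.update T v.1 SC with hT'
  have hmap : (insert v.1 J).val.map (fun i => (T' i).card) = σ := by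
    rw [insert_map_sizes v.1 J hCJ T' (fun _ => 0), ← hτcons]
    congr 1
    · rw [hT', Function.update_self, hSCcard']
    · rw [← hg]
      exact Multiset.map_congr rfl fun j hj => by
        rw [hT', Function.update_of_ne (by rintro rfl; exact hCJ hj), (hT j hj).1]
  have hbnd := (colour_bound hc h0 (insert v.1 J) T' hmap).2
  set U := (insert v.1 J).biUnion fun i => (T' i).image fun x => c (i, x) with hU
  -- the edge has at least s+1 colours
  have hsubU : insert a (insert b V'') ⊆ U := by
    intro z hz
    rcases mem_insert.mp hz with rfl | hz
    · refine mem_biUnion.mpr ⟨v.1, mem_insert_self _ _, ?_⟩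
      rw [hT', Function.update_self]
      refine mem_image.mpr ⟨v.2, hSCsub (mem_insert_self _ _), ?_⟩
      rw [ha, Prod.mk.eta]
    rcases mem_insert.mp hz with rfl | hz
    · refine mem_biUnion.mpr ⟨v.1, mem_insert_self _ _, ?_⟩
      rw [hT', Function.update_self]
      refine mem_image.mpr ⟨w.2, hSCsub (mem_insert_of_mem (mem_singleton_self _)), ?_⟩
      rw [hb, hvw, Prod.mk.eta]
    · -- z ∈ V''
      set j := rep z with hj
      have hjJ : j ∈ J := mem_image_of_mem rep hz
      refine mem_biUnion.mpr ⟨j, mem_insert_of_mem hjJ, ?_⟩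
      rw [hT', Function.update_of_ne (by intro h; rw [h] at hjJ; exact hCJ hjJ)]
      have hTne : (T j).Nonempty := by
        rw [← Finset.card_pos, (hT j hjJ).1]; exact hg1 j hjJ
      obtain ⟨y, hy⟩ := hTne
      refine mem_image.mpr ⟨y, hy, ?_⟩
      have h1 : c (j, y) = m j := (mem_filter.mp ((hT j hjJ).2 hy)).2
      rw [h1, hj, hrep z hz]
  have hcard : (insert a (insert b V'')).card = s + 1 := by
    have hbV : b ∉ V'' := by
      intro h
      have h2 := (mem_sdiff.mp (hV''sub h)).2
      simp at h2
    have haV : a ∉ insert b V'' := by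
      intro h
      rcases mem_insert.mp h with h | h
      · exact hab h
      · have h2 := (mem_sdiff.mp (hV''sub h)).2
        simp at h2
    rw [Finset.card_insert_of_notMem haV, Finset.card_insert_of_notMem hbV, hV''card]
    omega
  have := Finset.card_le_card hsubU
  rw [hcard] at this
  omega

end main

theorem stmt7 (n r q α β Δ : ℕ) (σ : Multiset ℕ)
    (hpart : IsPartitionOf σ r)
    (hΔmem : Δ ∈ σ) (hΔmax : ∀ x ∈ σ, x ≤ Δ) (hΔ2 : 2 ≤ Δ)
    (hα : 2 ≤ α) (hαs : α ≤ σ.card) (hsβ : σ.card = β)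
    (hn : σ.card ^ 2 ≤ n) (hq : (Δ - 1) * β + 1 ≤ q) :
    (∀ c : Fin n × Fin q → ℕ, isABColouring n q σ α β c → classesMonochromatic n q c) ∧
      ∀ k : ℕ,
        (∃ c : Fin n × Fin q → ℕ, isABColouring n q σ α β c ∧ usesExactly n q k c) ↔
          (∃ c : Fin n × Fin q → ℕ, classesMonochromatic n q c ∧
            isABColouring n q σ α β c ∧ usesExactly n q k c) := by
  have hmono : ∀ c : Fin n × Fin q → ℕ, isABColouring n q σ α β c →
      classesMonochromatic n q c := by
    intro c hc
    exact key hc hpart.2 hΔmem hΔmax hΔ2 hα (hα.trans hαs) hsβ.symm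
      (by rw [hsβ]; exact hq) hn
  refine ⟨hmono, fun k => ⟨?_, ?_⟩⟩
  · rintro ⟨c, hc, hk⟩
    exact ⟨c, hmono c hc, hc, hk⟩
  · rintro ⟨c, _, hc, hk⟩
    exact ⟨c, hc, hk⟩
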